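/- Let B ⊆ B(H) be a C*-subalgebra of the bounded operators on a Hilbert space H, and let b ∈ B be an idempotent (b² = b). Then the orthogonal projection onto the range of b belongs to B. -/

import Mathlib

open scoped InnerProductSpace


variable {H : Type*} [NormedAddCommGroup H] [InnerProductSpace ℂ H] [CompleteSpace H]

/-- The orthogonal projection of `H` onto a closed subspace `K`, as an element of `B(H)`. -/
noncomputable def orthProjOnto (K : Submodule ℂ H) (hK : IsClosed (K : Set H)) :
    H →L[ℂ] H :=
  haveI : CompleteSpace K := hK.completeSpace_coe
  K.subtypeL.comp (K.orthogonalProjectionOnto)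

set_option maxHeartbeats 1000000 in
set_option synthInstance.maxHeartbeats 200000 in
/-- Let `B ⊆ B(H)` be a (not necessarily unital) closed *-subalgebra of the bounded
operators on a Hilbert space and `b ∈ B` an idempotent.  Then the orthogonal
projection onto the range of `b` (which is closed, hypothesis `hcl`) belongs to `B`. -/
theorem orthogonalProjection_range_mem_of_idempotent
    (B : NonUnitalStarSubalgebra ℂ (H →L[ℂ] H)) (hB : IsClosed (B : Set (H →L[ℂ] H)))
    (b : H →L[ℂ] H) (hb : b ∈ B) (hidem : b * b = b)
    (hcl : IsClosed ((LinearMap.range (b : H →ₗ[ℂ] H) : Submodule ℂ H) : Set H)) :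
    orthProjOnto (LinearMap.range (b : H →ₗ[ℂ] H)) hcl ∈ B := by
  have hbs2 : star b * star b = star b := by
    rw [← star_mul, hidem]
  set w : H →L[ℂ] H := (b - star b) * star (b - star b) with hw_def
  have hw_sa : IsSelfAdjoint w := IsSelfAdjoint.mul_star_self _
  have hw_nonneg : (0 : H →L[ℂ] H) ≤ w := mul_star_self_nonneg _
  have hw_expand : w = b * star b - b - star b + star b * b := by
    have h1 : w = b * star b - b * b - star b * star b + star b * b := by
      rw [hw_def, star_sub, star_star]; noncomm_ring
    rw [h1, hidem, hbs2]
  have hw_memB : w ∈ B := by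
    rw [hw_expand]
    exact add_mem (sub_mem (sub_mem (mul_mem hb (star_mem hb)) hb) (star_mem hb))
      (mul_mem (star_mem hb) hb)
  have hcomm_wb : Commute w b := by
    have lhs : w * b = b * star b * b - b := by
      rw [hw_expand]
      simp only [sub_mul, add_mul]
      rw [hidem, mul_assoc (star b) b b, hidem]
      abel
    have rhs : b * w = b * star b * b - b := by
      rw [hw_expand]
      simp only [mul_sub, mul_add]
      rw [← mul_assoc b b (star b), hidem, ← mul_assoc b (star b) b]
      abel
    rw [Commute, SemiconjBy, lhs, rhs]
  have hqs : ∀ t : quasispectrum ℝ w, (0:ℝ) < 1 + (t : ℝ) := fun t => by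
    have := quasispectrum_nonneg_of_nonneg w hw_nonneg (t : ℝ) t.2
    linarith
  let fC : ContinuousMapZero (quasispectrum ℝ w) ℝ :=
    ⟨⟨fun t => (t : ℝ) / (1 + (t : ℝ)),
      Continuous.div (by fun_prop) (by fun_prop) (fun t => (hqs t).ne')⟩, by simp⟩
  have h0 : ((0 : quasispectrum ℝ w) : ℝ) = 0 := rfl
  have hcfc_id : cfcₙHom (R := ℝ) hw_sa (.id (quasispectrum ℝ w)) = w := cfcₙHom_id hw_sa
  have key : ∀ f : ContinuousMapZero (quasispectrum ℝ w) ℝ,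
      cfcₙHom (R := ℝ) hw_sa f ∈ B ∧ Commute (cfcₙHom (R := ℝ) hw_sa f) b := by
    intro f
    induction f using ContinuousMapZero.induction_on_of_compact with
    | zero => rw [map_zero]; exact ⟨zero_mem B, Commute.zero_left b⟩
    | id => rw [hcfc_id]; exact ⟨hw_memB, hcomm_wb⟩
    | star_id =>
      have : cfcₙHom (R := ℝ) hw_sa (star (.id (quasispectrum ℝ w))) = w := by
        rw [map_star, hcfc_id, hw_sa.star_eq]
      rw [this]; exact ⟨hw_memB, hcomm_wb⟩
    | add f g hf hg =>
      rw [map_add]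
      exact ⟨add_mem hf.1 hg.1, hf.2.add_left hg.2⟩
    | mul f g hf hg =>
      rw [map_mul]
      exact ⟨mul_mem hf.1 hg.1, hf.2.mul_left hg.2⟩
    | smul r f hf =>
      rw [map_smul]
      refine ⟨?_, hf.2.smul_left r⟩
      have : r • cfcₙHom (R := ℝ) hw_sa f = (r : ℂ) • cfcₙHom (R := ℝ) hw_sa f :=
        (Complex.coe_smul r _).symm
      rw [this]
      exact SMulMemClass.smul_mem _ hf.1
    | frequently f hf =>
      have hclosed : IsClosed {x : H →L[ℂ] H | x ∈ B ∧ Commute x b} := by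
        have h2 : IsClosed {x : H →L[ℂ] H | x * b = b * x} :=
          isClosed_eq (by fun_prop) (by fun_prop)
        exact hB.inter h2
      exact hclosed.mem_of_frequently_of_tendsto (hf.mono fun g hg => hg)
        (cfcₙHom_continuous hw_sa).continuousAt
  set y : H →L[ℂ] H := cfcₙHom (R := ℝ) hw_sa fC with hy_def
  have hyB : y ∈ B := (key fC).1
  have hyb : Commute y b := (key fC).2
  have hy_sa : IsSelfAdjoint y := by
    have hstar : star fC = fC := by ext t; exact star_trivial _
    rw [hy_def, IsSelfAdjoint, ← map_star, hstar]
  have hyw : y + w * y = w := by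
    have hfun : fC + (ContinuousMapZero.id (quasispectrum ℝ w)) * fC = ContinuousMapZero.id (quasispectrum ℝ w) := by
      ext t
      show (t : ℝ) / (1 + t) + (t : ℝ) * ((t : ℝ) / (1 + t)) = (t : ℝ)
      have h := (hqs t).ne'
      field_simp
    have h2 : cfcₙHom (R := ℝ) hw_sa (fC + (ContinuousMapZero.id (quasispectrum ℝ w)) * fC)
        = cfcₙHom (R := ℝ) hw_sa (ContinuousMapZero.id (quasispectrum ℝ w)) := by rw [hfun]
    rwa [map_add, map_mul, hcfc_id] at h2
  set q : H →L[ℂ] H := 1 - y with hq_def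
  have hq_sa : IsSelfAdjoint q := (IsSelfAdjoint.one _).sub hy_sa
  have hcq : (1 + w) * q = 1 := by
    rw [hq_def]
    have h : (1 + w) * (1 - y) = 1 + w - (y + w * y) := by noncomm_ring
    rw [h, hyw]; abel
  have hqb : Commute q b := (Commute.one_left b).sub_left hyb
  have hqbs : Commute q (star b) := by
    have := congrArg star hqb.eq
    rw [star_mul, star_mul, hq_sa.star_eq] at this
    exact this.symm
  have hbc : b * (1 + w) = b * star b * b := by
    rw [hw_expand]
    simp only [mul_add, mul_sub, mul_one]
    rw [← mul_assoc b b (star b), hidem, ← mul_assoc b (star b) b]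
    abel
  set p : H →L[ℂ] H := b * star b * q with hp_def
  have hpB : p ∈ B := by
    rw [hp_def, hq_def, mul_sub, mul_one]
    exact sub_mem (mul_mem hb (star_mem hb)) (mul_mem (mul_mem hb (star_mem hb)) hyB)
  have hpb : p * b = b := by
    rw [hp_def, mul_assoc, hqb.eq, ← mul_assoc, ← hbc, mul_assoc, hcq, mul_one]
  have hp_sa : IsSelfAdjoint p := by
    rw [hp_def]
    have h1 : star (b * star b * q) = q * (b * star b) := by
      simp [star_mul, hq_sa.star_eq, mul_assoc]
    rw [IsSelfAdjoint, h1]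
    exact (hqb.mul_right hqbs).eq
  have hpp : p * p = p := by
    have : p * p = (p * b) * (star b * q) := by rw [hp_def]; noncomm_ring
    rw [this, hpb, ← mul_assoc, ← hp_def]
  -- p acts as identity on range b
  have hp_fix : ∀ x ∈ LinearMap.range (b : H →ₗ[ℂ] H), p x = x := by
    rintro x ⟨v, rfl⟩
    have := congrFun (congrArg (fun T : H →L[ℂ] H => (T : H → H)) hpb) v
    simpa using this
  have hp_mem : ∀ x : H, p x ∈ LinearMap.range (b : H →ₗ[ℂ] H) := by
    intro x
    have : p = b * (star b * q) := by rw [hp_def, mul_assoc]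
    rw [this]
    exact ⟨(star b * q) x, rfl⟩
  -- conclude
  have hfinal : orthProjOnto (LinearMap.range (b : H →ₗ[ℂ] H)) hcl = p := by
    unfold orthProjOnto
    haveI : CompleteSpace (LinearMap.range (b : H →ₗ[ℂ] H)) := hcl.completeSpace_coe
    ext x
    simp only [ContinuousLinearMap.comp_apply, Submodule.subtypeL_apply]
    have hexp : p (x - p x) = 0 := by
      have h2 := congrFun (congrArg (fun T : H →L[ℂ] H => (T : H → H)) hpp) x
      simp only [ContinuousLinearMap.mul_apply] at h2
      simp [map_sub, h2]
    have horth : ∀ k ∈ LinearMap.range (b : H →ₗ[ℂ] H), ⟪x - p x, k⟫_ℂ = 0 := by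
      intro k hk
      rw [← hp_fix k hk, ← ContinuousLinearMap.adjoint_inner_left,
        hp_sa.adjoint_eq, hexp, inner_zero_left]
    rw [← Submodule.starProjection_apply]
    exact Submodule.eq_starProjection_of_mem_of_inner_eq_zero (hp_mem x) horth
  rw [hfinal]
  exact hpB
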